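/- arXiv:2510.25546 — 2 statements merged into one kernel-verified Lean document; each statement's English description precedes it below -/
import Mathlib

section
/- Let V be a finite-dimensional inner product space, Π the orthogonal projection onto a subspace W of V, P the orthogonal projection onto a subspace A of V with W ⊆ A, and L : V → V linear with L(W) ⊆ W. Then for every t ≥ 0, Π ∘ e^{t(Π∘L∘Π)} ∘ Π = Π ∘ e^{t(P∘L∘P)} ∘ Π. -/
/-- if `Proj` is the orthogonal projection onto `W`, `P` the orthogonal
projection onto `A` with `W ⊆ A`, and `L(W) ⊆ W`, then for all `t ≥ 0`,
`Proj ∘ e^{t(Proj L Proj)} ∘ Proj = Proj ∘ e^{t(P L P)} ∘ Proj`. -/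
theorem stmt13
    {V : Type*} [NormedAddCommGroup V] [InnerProductSpace ℂ V] [FiniteDimensional ℂ V]
    (Proj P L : V →L[ℂ] V) (W A : Submodule ℂ V) (hWA : W ≤ A)
    (hProjIdem : Proj.comp Proj = Proj) (hProjAdj : ContinuousLinearMap.adjoint Proj = Proj)
    (hProjRange : ∀ x, Proj x ∈ W) (hProjFix : ∀ x ∈ W, Proj x = x)
    (hPIdem : P.comp P = P) (hPAdj : ContinuousLinearMap.adjoint P = P)
    (hPRange : ∀ x, P x ∈ A) (hPFix : ∀ x ∈ A, P x = x)
    (hLinv : ∀ x ∈ W, L x ∈ W) :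
    ∀ t : ℝ, 0 ≤ t →
      Proj.comp ((NormedSpace.exp ((t : ℂ) • (Proj.comp (L.comp Proj)))).comp Proj) =
        Proj.comp ((NormedSpace.exp ((t : ℂ) • (P.comp (L.comp P)))).comp Proj) := by
  intro t ht
  set M : V →L[ℂ] V := Proj.comp (L.comp Proj) with hM
  set N : V →L[ℂ] V := P.comp (L.comp P) with hN
  -- basic algebraic facts, written with `*` (which is `comp`)
  have hPQ : P * Proj = Proj := by
    ext x
    exact hPFix _ (hWA (hProjRange x))
  have hLQ : Proj * (L * Proj) = L * Proj := by
    ext x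
    exact hProjFix _ (hLinv _ (hProjRange x))
  have hPLQ : P * (L * Proj) = L * Proj := by
    ext x
    exact hPFix _ (hWA (hLinv _ (hProjRange x)))
  have hMLQ : M = L * Proj := hLQ
  have hQM : Proj * M = M := by
    rw [hMLQ]; exact hLQ
  have hMQ : M * Proj = M := by
    rw [hMLQ, mul_assoc]
    show L * (Proj.comp Proj) = L * Proj
    rw [hProjIdem]
  have hNQ : N * Proj = M := by
    rw [hN, hMLQ]
    show P.comp (L.comp P) * Proj = L * Proj
    rw [show P.comp (L.comp P) = P * (L * P) from rfl, mul_assoc, mul_assoc,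
      show P * Proj = P.comp Proj from rfl]
    rw [show P.comp Proj = P * Proj from rfl, hPQ, hPLQ]
  have key : ∀ k : ℕ, N ^ k * Proj = M ^ k * Proj := by
    intro k
    induction k with
    | zero => simp
    | succ k ih =>
      rw [pow_succ, pow_succ, mul_assoc, hNQ, ← hQM, ← mul_assoc, ih, mul_assoc, hQM,
        mul_assoc, hMQ]
  have keyt : ∀ k : ℕ, ((t : ℂ) • N) ^ k * Proj = ((t : ℂ) • M) ^ k * Proj := by
    intro k
    rw [smul_pow, smul_pow, smul_mul_assoc, smul_mul_assoc, key]
  have hexp : NormedSpace.exp ((t : ℂ) • N) * Proj = NormedSpace.exp ((t : ℂ) • M) * Proj := by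
    rw [NormedSpace.exp_eq_tsum ℂ]
    beta_reduce
    rw [← (NormedSpace.expSeries_summable' (𝕂 := ℂ) ((t : ℂ) • N)).tsum_mul_right,
      ← (NormedSpace.expSeries_summable' (𝕂 := ℂ) ((t : ℂ) • M)).tsum_mul_right]
    refine tsum_congr fun n => ?_
    rw [smul_mul_assoc, smul_mul_assoc, keyt]
  calc Proj.comp ((NormedSpace.exp ((t : ℂ) • M)).comp Proj)
      = Proj * (NormedSpace.exp ((t : ℂ) • M) * Proj) := rfl
    _ = Proj * (NormedSpace.exp ((t : ℂ) • N) * Proj) := by rw [hexp]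
    _ = Proj.comp ((NormedSpace.exp ((t : ℂ) • N)).comp Proj) := rfl
end

section
/- Let H_S = ℂ², H_B = ℂ^{2^N}, and let A = span{σ_u ⊗ |j⟩⟨j|} as above. Suppose H₀ and every L_k are of the form Σ_j (c_j σ_z + d_j 𝟙) ⊗ |j⟩⟨j| (i.e., diagonal in the bath basis and diagonal or proportional to identity on the system up to σ_z terms), and H_c = σ_x ⊗ 𝟙_B u₀ + σ_z ⊗ 𝟙_B u₁ for real u₀, u₁. Then the Lindblad generator L(O) = i[H₀ + H_c, O] + Σ_k (L_k† O L_k − ½{L_k† L_k, O}) maps A into A. -/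
open Matrix

/-- Kronecker product of a system operator with a bath operator. -/
noncomputable def tensorOp {F G : Type*}
    (A : Matrix F F ℂ) (B : Matrix G G ℂ) : Matrix (F × G) (F × G) ℂ :=
  Matrix.of fun p q => A p.1 q.1 * B p.2 q.2

noncomputable def sigmaX : Matrix (Fin 2) (Fin 2) ℂ := !![0, 1; 1, 0]
noncomputable def sigmaY : Matrix (Fin 2) (Fin 2) ℂ := !![0, -Complex.I; Complex.I, 0]
noncomputable def sigmaZ : Matrix (Fin 2) (Fin 2) ℂ := !![1, 0; 0, -1]

/-- The Pauli matrices `σ₀ = 𝟙, σ_x, σ_y, σ_z`. -/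
noncomputable def pauli : Fin 4 → Matrix (Fin 2) (Fin 2) ℂ := ![1, sigmaX, sigmaY, sigmaZ]

noncomputable def blk {F G : Type*} : Submodule ℂ (Matrix (F × G) (F × G) ℂ) where
  carrier := {M | ∀ p q : F × G, p.2 ≠ q.2 → M p q = 0}
  add_mem' := by intro a b ha hb p q h; simp [Matrix.add_apply, ha p q h, hb p q h]
  zero_mem' := by intro p q h; simp
  smul_mem' := by intro c a ha p q h; simp [Matrix.smul_apply, ha p q h]

lemma blk_mul {F G : Type*} [Fintype F] [Fintype G]
    {M N : Matrix (F × G) (F × G) ℂ} (hM : M ∈ blk) (hN : N ∈ blk) : M * N ∈ blk := by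
  intro p q h
  rw [Matrix.mul_apply]
  apply Finset.sum_eq_zero
  intro r _
  by_cases hr : p.2 = r.2
  · rw [hN r q (hr ▸ h), mul_zero]
  · rw [hM p r hr, zero_mul]

lemma blk_conjTranspose {F G : Type*} {M : Matrix (F × G) (F × G) ℂ} (hM : M ∈ blk) :
    Mᴴ ∈ blk := by
  intro p q h
  rw [Matrix.conjTranspose_apply, hM q p (Ne.symm h), star_zero]

lemma tensor_std_mem_blk {F G : Type*} [DecidableEq G] (A : Matrix F F ℂ) (j : G) :
    tensorOp A (Matrix.single j j 1) ∈ blk := by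
  intro p q h
  have : Matrix.single j j (1:ℂ) p.2 q.2 = 0 := by
    simp only [Matrix.single, Matrix.of_apply]
    exact if_neg (fun ⟨h1, h2⟩ => h (h1.symm.trans h2))
  simp [tensorOp, this]

lemma tensor_one_mem_blk {F G : Type*} [DecidableEq G] (A : Matrix F F ℂ) :
    tensorOp A (1 : Matrix G G ℂ) ∈ blk := by
  intro p q h
  have : (1 : Matrix G G ℂ) p.2 q.2 = 0 := Matrix.one_apply_ne h
  simp [tensorOp, this]

lemma pauli_span_top : Submodule.span ℂ (Set.range pauli) = ⊤ := by
  rw [eq_top_iff]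
  intro A _
  have hstd : ∀ a b : Fin 2, Matrix.single a b (1:ℂ) ∈
      Submodule.span ℂ (Set.range pauli) := by
    intro a b
    have h0 : pauli 0 ∈ Submodule.span ℂ (Set.range pauli) := Submodule.subset_span ⟨0, rfl⟩
    have h1 : pauli 1 ∈ Submodule.span ℂ (Set.range pauli) := Submodule.subset_span ⟨1, rfl⟩
    have h2 : pauli 2 ∈ Submodule.span ℂ (Set.range pauli) := Submodule.subset_span ⟨2, rfl⟩
    have h3 : pauli 3 ∈ Submodule.span ℂ (Set.range pauli) := Submodule.subset_span ⟨3, rfl⟩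
    have e00 : Matrix.single (0:Fin 2) 0 (1:ℂ) ∈ Submodule.span ℂ (Set.range pauli) := by
      have : Matrix.single (0:Fin 2) 0 (1:ℂ) =
          (1/2 : ℂ) • pauli 0 + (1/2 : ℂ) • pauli 3 := by
        ext i j; fin_cases i <;> fin_cases j <;>
          simp [pauli, sigmaZ, Matrix.single] <;> norm_num
      rw [this]; exact Submodule.add_mem _ (Submodule.smul_mem _ _ h0) (Submodule.smul_mem _ _ h3)
    have e01 : Matrix.single (0:Fin 2) 1 (1:ℂ) ∈ Submodule.span ℂ (Set.range pauli) := by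
      have : Matrix.single (0:Fin 2) 1 (1:ℂ) =
          (1/2 : ℂ) • pauli 1 + (Complex.I/2) • pauli 2 := by
        ext i j; fin_cases i <;> fin_cases j <;>
          simp [pauli, sigmaX, sigmaY, Matrix.single] <;> ring_nf <;> norm_num
      rw [this]; exact Submodule.add_mem _ (Submodule.smul_mem _ _ h1) (Submodule.smul_mem _ _ h2)
    have e10 : Matrix.single (1:Fin 2) 0 (1:ℂ) ∈ Submodule.span ℂ (Set.range pauli) := by
      have : Matrix.single (1:Fin 2) 0 (1:ℂ) =
          (1/2 : ℂ) • pauli 1 + (-Complex.I/2) • pauli 2 := by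
        ext i j; fin_cases i <;> fin_cases j <;>
          simp [pauli, sigmaX, sigmaY, Matrix.single] <;> ring_nf <;> norm_num
      rw [this]; exact Submodule.add_mem _ (Submodule.smul_mem _ _ h1) (Submodule.smul_mem _ _ h2)
    have e11 : Matrix.single (1:Fin 2) 1 (1:ℂ) ∈ Submodule.span ℂ (Set.range pauli) := by
      have : Matrix.single (1:Fin 2) 1 (1:ℂ) =
          (1/2 : ℂ) • pauli 0 + (-1/2 : ℂ) • pauli 3 := by
        ext i j; fin_cases i <;> fin_cases j <;>
          simp [pauli, sigmaZ, Matrix.single] <;> norm_num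
      rw [this]; exact Submodule.add_mem _ (Submodule.smul_mem _ _ h0) (Submodule.smul_mem _ _ h3)
    fin_cases a <;> fin_cases b
    · exact e00
    · exact e01
    · exact e10
    · exact e11
  rw [Matrix.matrix_eq_sum_single A]
  apply Submodule.sum_mem; intro a _
  apply Submodule.sum_mem; intro b _
  rw [show Matrix.single a b (A a b) = A a b • Matrix.single a b (1:ℂ) by
    rw [Matrix.smul_single, smul_eq_mul, mul_one]]
  exact Submodule.smul_mem _ _ (hstd a b)

lemma tensor_mem_span {m : ℕ} (A : Matrix (Fin 2) (Fin 2) ℂ) (j : Fin m) :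
    tensorOp A (Matrix.single j j (1:ℂ)) ∈
      Submodule.span ℂ
        {M : Matrix (Fin 2 × Fin m) (Fin 2 × Fin m) ℂ |
          ∃ (u : Fin 4) (j : Fin m),
            M = tensorOp (pauli u) (Matrix.single j j (1 : ℂ))} := by
  have hA : A ∈ Submodule.span ℂ (Set.range pauli) := by rw [pauli_span_top]; trivial
  induction hA using Submodule.span_induction with
  | mem x hx => obtain ⟨u, rfl⟩ := hx; exact Submodule.subset_span ⟨u, j, rfl⟩
  | zero =>
      have : tensorOp (0 : Matrix (Fin 2) (Fin 2) ℂ)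
          (Matrix.single j j (1:ℂ)) = 0 := by
        ext p q; simp [tensorOp]
      rw [this]; exact Submodule.zero_mem _
  | add x y _ _ hx hy =>
      have : tensorOp (x + y) (Matrix.single j j (1:ℂ)) =
          tensorOp x (Matrix.single j j (1:ℂ)) +
          tensorOp y (Matrix.single j j (1:ℂ)) := by
        ext p q; simp [tensorOp, add_mul]
      rw [this]; exact Submodule.add_mem _ hx hy
  | smul a x _ hx =>
      have : tensorOp (a • x) (Matrix.single j j (1:ℂ)) =
          a • tensorOp x (Matrix.single j j (1:ℂ)) := by
        ext p q; simp [tensorOp, mul_assoc]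
      rw [this]; exact Submodule.smul_mem _ _ hx

lemma span_eq_blk (m : ℕ) :
    Submodule.span ℂ
        {M : Matrix (Fin 2 × Fin m) (Fin 2 × Fin m) ℂ |
          ∃ (u : Fin 4) (j : Fin m),
            M = tensorOp (pauli u) (Matrix.single j j (1 : ℂ))} = blk := by
  apply le_antisymm
  · rw [Submodule.span_le]
    rintro M ⟨u, j, rfl⟩
    exact tensor_std_mem_blk _ j
  · intro M hM
    have hdec : M = ∑ j : Fin m,
        tensorOp (Matrix.of fun a b => M (a, j) (b, j)) (Matrix.single j j (1:ℂ)) := by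
      ext ⟨a, j⟩ ⟨b, k⟩
      rw [Matrix.sum_apply]
      simp only [tensorOp, Matrix.of_apply, Matrix.single]
      by_cases hjk : j = k
      · subst hjk
        rw [Finset.sum_eq_single j]
        · simp
        · intro j' _ hj'; simp [hj']
        · simp
      · rw [hM (a, j) (b, k) hjk]
        symm; apply Finset.sum_eq_zero; intro j' _
        have : ¬ (j' = j ∧ j' = k) := fun ⟨h1, h2⟩ => hjk (h1.symm.trans h2)
        simp [this]
    rw [hdec]
    exact Submodule.sum_mem _ fun j _ => tensor_mem_span _ j

/-- for a dephasing central-spin model with bath-diagonal `H₀` and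
noise operators, and a controlled system Hamiltonian `H_c = u₀ σ_x ⊗ 𝟙 + u₁ σ_z ⊗ 𝟙`,
the Lindblad generator maps the algebra `A = span{σ_u ⊗ |j⟩⟨j|}` into itself. -/
theorem stmt15 (N : ℕ) {K : Type*} [Fintype K]
    (c d : Fin (2 ^ N) → ℝ) (c' d' : K → Fin (2 ^ N) → ℝ) (u₀ u₁ : ℝ)
    (H₀ : Matrix (Fin 2 × Fin (2 ^ N)) (Fin 2 × Fin (2 ^ N)) ℂ)
    (hH₀ : H₀ = ∑ j : Fin (2 ^ N),
      tensorOp ((c j : ℂ) • sigmaZ + (d j : ℂ) • 1) (Matrix.single j j (1 : ℂ)))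
    (L : K → Matrix (Fin 2 × Fin (2 ^ N)) (Fin 2 × Fin (2 ^ N)) ℂ)
    (hL : ∀ k, L k = ∑ j : Fin (2 ^ N),
      tensorOp ((c' k j : ℂ) • sigmaZ + (d' k j : ℂ) • 1) (Matrix.single j j (1 : ℂ)))
    (Hc : Matrix (Fin 2 × Fin (2 ^ N)) (Fin 2 × Fin (2 ^ N)) ℂ)
    (hHc : Hc = (u₀ : ℂ) • tensorOp sigmaX (1 : Matrix (Fin (2 ^ N)) (Fin (2 ^ N)) ℂ) +
      (u₁ : ℂ) • tensorOp sigmaZ (1 : Matrix (Fin (2 ^ N)) (Fin (2 ^ N)) ℂ)) :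
    ∀ O ∈ Submodule.span ℂ
        {M : Matrix (Fin 2 × Fin (2 ^ N)) (Fin 2 × Fin (2 ^ N)) ℂ |
          ∃ (u : Fin 4) (j : Fin (2 ^ N)),
            M = tensorOp (pauli u) (Matrix.single j j (1 : ℂ))},
      (Complex.I • ((H₀ + Hc) * O - O * (H₀ + Hc)) +
        ∑ k : K, ((L k)ᴴ * O * L k -
          (1/2 : ℂ) • ((L k)ᴴ * L k * O + O * ((L k)ᴴ * L k)))) ∈
      Submodule.span ℂ
        {M : Matrix (Fin 2 × Fin (2 ^ N)) (Fin 2 × Fin (2 ^ N)) ℂ |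
          ∃ (u : Fin 4) (j : Fin (2 ^ N)),
            M = tensorOp (pauli u) (Matrix.single j j (1 : ℂ))} := by
  intro O hO
  rw [span_eq_blk] at hO ⊢
  have hH₀b : H₀ ∈ blk := by
    rw [hH₀]; exact Submodule.sum_mem _ fun j _ => tensor_std_mem_blk _ j
  have hHcb : Hc ∈ blk := by
    rw [hHc]
    exact Submodule.add_mem _ (Submodule.smul_mem _ _ (tensor_one_mem_blk _))
      (Submodule.smul_mem _ _ (tensor_one_mem_blk _))
  have hLb : ∀ k, L k ∈ blk := fun k => by
    rw [hL k]; exact Submodule.sum_mem _ fun j _ => tensor_std_mem_blk _ j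
  have hLHb : ∀ k, (L k)ᴴ ∈ blk := fun k => blk_conjTranspose (hLb k)
  have hH : H₀ + Hc ∈ blk := Submodule.add_mem _ hH₀b hHcb
  apply Submodule.add_mem
  · exact Submodule.smul_mem _ _ (Submodule.sub_mem _ (blk_mul hH hO) (blk_mul hO hH))
  · apply Submodule.sum_mem
    intro k _
    apply Submodule.sub_mem
    · exact blk_mul (blk_mul (hLHb k) hO) (hLb k)
    · exact Submodule.smul_mem _ _ (Submodule.add_mem _
        (blk_mul (blk_mul (hLHb k) (hLb k)) hO)
        (blk_mul hO (blk_mul (hLHb k) (hLb k))))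
end
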